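/- arXiv:1910.10267 — 2 statements merged into one kernel-verified Lean document; each statement's English description precedes it below -/
import Mathlib

section
/- For each k ≥ 0, the map [a_1,…,a_n] ↦ isgn[a_1,…,a_n] is a bijection between positive continued fractions with ℓ_n = k + 2, considered up to the identity [c_1,…,c_m,1] = [c_1,…,c_m + 1], and the set {1,−1}^k. Consequently, the map sending p/q to the inner sign sequence of a positive continued fraction expansion of p/q is a well-defined bijection from {p/q ∈ ℚ : p/q > 1} onto the set ⋃_{k ≥ 0} {1,−1}^k of all finite sequences of signs. -/
open scoped BigOperators

/-- Continued fraction value in `ℚ ∪ {∞}`, with `none` playing the role of `∞ = 1/0`.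
`[ ] = ∞`, and `[c₁,…,cₙ] = c₁ + 1/[c₂,…,cₙ]` with `x + ∞ = ∞` and `1/∞ = 0`. -/
def cfVal : List ℤ → Option ℚ
  | [] => none
  | c :: cs =>
    match cfVal cs with
    | none => some (c : ℚ)
    | some x => if x = 0 then none else some ((c : ℚ) + 1 / x)

/-- A continued fraction is positive if every term is at least 1. -/
def PosCF (L : List ℤ) : Prop := ∀ a ∈ L, 1 ≤ a

/-- A continued fraction is even if every term is even and nonzero. -/
def EvenCF (L : List ℤ) : Prop := ∀ b ∈ L, 2 ∣ b ∧ b ≠ 0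

/-- `ell L i = ℓ_i = |c₁| + ⋯ + |c_i|`. -/
def ell (L : List ℤ) (i : ℕ) : ℕ := ((L.take i).map Int.natAbs).sum

/-- `typ L i = t_i = (−1)^(i−1)·sgn(c_i)` for `1 ≤ i ≤ n`, with the convention `t_0 = −1`. -/
def typ (L : List ℤ) (i : ℕ) : ℤ :=
  if i = 0 then -1 else (-1) ^ (i - 1) * Int.sign (L.getD (i - 1) 0)

/-- Auxiliary for the sign sequence, alternating the sign `s`. -/
def sgnAux : ℤ → List ℤ → List ℤ
  | _, [] => []
  | s, c :: cs => List.replicate c.natAbs (s * Int.sign c) ++ sgnAux (-s) cs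

/-- The sign sequence `sgn[c₁,…,cₙ]`: `t₁` repeated `|c₁|` times, …, `tₙ` repeated `|cₙ|` times. -/
def signSeq (L : List ℤ) : List ℤ := sgnAux 1 L

/-- The inner sign sequence: the sign sequence with first and last entries deleted. -/
def isgn (L : List ℤ) : List ℤ := (signSeq L).tail.dropLast

/-- Two lists are related by the identity `[c₁,…,c_m,1] = [c₁,…,c_m + 1]`. -/
def lastOneRel (L M : List ℤ) : Prop :=
  ∃ (P : List ℤ) (c : ℤ),
    (L = P ++ [c, 1] ∧ M = P ++ [c + 1]) ∨ (M = P ++ [c, 1] ∧ L = P ++ [c + 1])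

-- run-length decoder
def decAux : ℤ → ℕ → List ℤ → List ℤ
  | _, n, [] => [(n : ℤ)]
  | s, n, a :: w => if a = s then decAux s (n+1) w else (n : ℤ) :: decAux a 1 w

def dec : List ℤ → List ℤ
  | [] => []
  | a :: v => decAux a 1 v

lemma decAux_replicate (s : ℤ) (m : ℕ) : ∀ (n : ℕ) (rest : List ℤ),
    decAux s n (List.replicate m s ++ rest) = decAux s (n + m) rest := by
  induction m with
  | zero => simp
  | succ m ih =>
    intro n rest
    rw [List.replicate_succ, List.cons_append]
    show decAux s n (s :: _) = _
    rw [decAux, if_pos rfl, ih]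
    congr 1; omega

lemma decAux_of_head_ne (s : ℤ) (n : ℕ) (rest : List ℤ) (h : rest.head? ≠ some s) :
    decAux s n rest = (n : ℤ) :: dec rest := by
  rcases rest with _ | ⟨b, v⟩
  · rfl
  · rw [decAux, if_neg (by simpa using h)]; rfl

lemma dec_replicate (s : ℤ) (n : ℕ) (hn : 1 ≤ n) (rest : List ℤ) (hrest : rest.head? ≠ some s) :
    dec (List.replicate n s ++ rest) = (n : ℤ) :: dec rest := by
  obtain ⟨m, rfl⟩ : ∃ m, n = m + 1 := ⟨n - 1, by omega⟩
  rw [List.replicate_succ, List.cons_append]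
  show decAux s 1 _ = _
  rw [decAux_replicate, decAux_of_head_ne _ _ _ hrest]
  congr 1; omega

lemma sgnAux_length (s : ℤ) (L : List ℤ) : (sgnAux s L).length = (L.map Int.natAbs).sum := by
  induction L generalizing s with
  | nil => rfl
  | cons c cs ih => simp [sgnAux, ih]

lemma ell_eq (L : List ℤ) : ell L L.length = (L.map Int.natAbs).sum := by
  simp [ell]

lemma sgnAux_pos (s : ℤ) (L : List ℤ) (hL : PosCF L) :
    sgnAux s L = match L with
      | [] => []
      | c :: cs => List.replicate c.natAbs s ++ sgnAux (-s) cs := by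
  rcases L with _ | ⟨c, cs⟩
  · rfl
  · have hc : (1:ℤ) ≤ c := hL c (by simp)
    rw [sgnAux, Int.sign_eq_one_of_pos (by omega), mul_one]

lemma sgnAux_mem (s : ℤ) (L : List ℤ) (hL : PosCF L) :
    ∀ a ∈ sgnAux s L, a = s ∨ a = -s := by
  induction L generalizing s with
  | nil => simp [sgnAux]
  | cons c cs ih =>
    rw [sgnAux_pos s _ hL]
    intro a ha
    rcases List.mem_append.mp ha with h | h
    · left; exact List.eq_of_mem_replicate h
    · rcases ih (-s) (fun b hb => hL b (by simp [hb])) a h with h' | h'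
      · right; exact h'
      · left; omega

lemma sgnAux_head (s : ℤ) (L : List ℤ) (hL : PosCF L) (hne : L ≠ []) :
    (sgnAux s L).head? = some s := by
  rcases L with _ | ⟨c, cs⟩
  · exact absurd rfl hne
  · rw [sgnAux_pos s _ hL]
    have hc : (1:ℤ) ≤ c := hL c (by simp)
    obtain ⟨m, hn⟩ : ∃ m, c.natAbs = m + 1 := ⟨c.natAbs - 1, by omega⟩
    simp [hn, List.replicate_succ]

lemma sgnAux_append (s : ℤ) (P Q : List ℤ) :
    sgnAux s (P ++ Q) = sgnAux s P ++ sgnAux ((-1) ^ P.length * s) Q := by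
  induction P generalizing s with
  | nil => simp [sgnAux]
  | cons c cs ih =>
    have h : ((-1:ℤ)) ^ (c :: cs).length * s = (-1) ^ cs.length * (-s) := by
      simp [pow_succ]
    rw [List.cons_append, sgnAux, sgnAux, ih (-s), h, List.append_assoc]

lemma dec_sgnAux (s : ℤ) (hs : s ≠ 0) (L : List ℤ) (hL : PosCF L) :
    dec (sgnAux s L) = L := by
  induction L generalizing s with
  | nil => rfl
  | cons c cs ih =>
    rw [sgnAux_pos s _ hL]
    have hc : (1:ℤ) ≤ c := hL c (by simp)
    have hcs : PosCF cs := fun b hb => hL b (by simp [hb])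
    have hhead : (sgnAux (-s) cs).head? ≠ some s := by
      rcases cs with _ | ⟨d, ds⟩
      · simp [sgnAux]
      · rw [sgnAux_head (-s) _ hcs (by simp)]
        simp; omega
    rw [dec_replicate s c.natAbs (by omega) _ hhead, ih (-s) (by omega) hcs]
    congr 1; omega

lemma decAux_spec : ∀ (v : List ℤ) (s : ℤ) (n : ℕ), 1 ≤ n → (s = 1 ∨ s = -1) →
    (∀ x ∈ v, x = 1 ∨ x = -1) →
    PosCF (decAux s n v) ∧ sgnAux s (decAux s n v) = List.replicate n s ++ v := by
  intro v
  induction v with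
  | nil =>
    intro s n hn hs _
    constructor
    · intro x hx
      simp [decAux] at hx
      omega
    · show sgnAux s [(n:ℤ)] = _
      have h1 : Int.sign (n:ℤ) = 1 := Int.sign_eq_one_of_pos (by exact_mod_cast hn)
      simp [sgnAux, h1]
  | cons a v ih =>
    intro s n hn hs hv
    have ha : a = 1 ∨ a = -1 := hv a (by simp)
    have hv' : ∀ x ∈ v, x = 1 ∨ x = -1 := fun x hx => hv x (by simp [hx])
    rw [decAux]
    by_cases has : a = s
    · rw [if_pos has]
      obtain ⟨h1, h2⟩ := ih s (n+1) (by omega) hs hv'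
      refine ⟨h1, ?_⟩
      rw [h2, List.replicate_succ', has, List.append_assoc, List.singleton_append]
    · rw [if_neg has]
      have hanz : a = -s := by rcases ha with h | h <;> rcases hs with h' | h' <;> omega
      obtain ⟨h1, h2⟩ := ih a 1 le_rfl ha hv'
      constructor
      · intro x hx
        rcases List.mem_cons.mp hx with h | h
        · subst h; exact_mod_cast hn
        · exact h1 x h
      · rw [sgnAux]
        have hsn : Int.sign ((n:ℤ)) = 1 := Int.sign_eq_one_of_pos (by exact_mod_cast hn)
        have hna : ((n:ℤ)).natAbs = n := Int.natAbs_natCast n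
        rw [hsn, mul_one, hna, ← hanz, h2, List.replicate_one, List.singleton_append]

lemma sgnAux_dec (a : ℤ) (v : List ℤ) (hv : ∀ x ∈ a :: v, x = 1 ∨ x = -1) :
    sgnAux a (dec (a :: v)) = a :: v ∧ PosCF (dec (a :: v)) := by
  have ha : a = 1 ∨ a = -1 := hv a (by simp)
  obtain ⟨h1, h2⟩ := decAux_spec v a 1 le_rfl ha (fun x hx => hv x (by simp [hx]))
  exact ⟨by rw [show dec (a :: v) = decAux a 1 v from rfl, h2, List.replicate_one,
    List.singleton_append], h1⟩

lemma signSeq_inj (L M : List ℤ) (hL : PosCF L) (hM : PosCF M) (h : signSeq L = signSeq M) :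
    L = M := by
  have := dec_sgnAux 1 one_ne_zero L hL
  rw [← this, ← dec_sgnAux 1 one_ne_zero M hM]
  exact congrArg dec h

lemma tail_dropLast_concat (A : List ℤ) (x : ℤ) (hA : A ≠ []) :
    (A ++ [x]).tail.dropLast = A.tail := by
  rcases A with _ | ⟨h, t⟩
  · exact absurd rfl hA
  · simp

lemma signSeq_ne_nil (K : List ℤ) (hK : PosCF K) (hne : K ≠ []) : signSeq K ≠ [] := by
  intro h
  have := sgnAux_head 1 K hK hne
  rw [show sgnAux 1 K = signSeq K from rfl, h] at this
  simp at this

lemma structL (L : List ℤ) (hL : PosCF L) (h2 : 2 ≤ ell L L.length) :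
    ∃ K : List ℤ, PosCF K ∧ K ≠ [] ∧ isgn L = (signSeq K).tail ∧
      ((∃ P c, L = P ++ [c] ∧ K = P ++ [c-1] ∧ 2 ≤ c) ∨ (∃ P, L = P ++ [1] ∧ K = P)) := by
  have hLne : L ≠ [] := by
    intro h; rw [h] at h2; simp [ell] at h2
  obtain ⟨P, c, rfl⟩ : ∃ P c, L = P ++ [c] := by
    rcases List.eq_nil_or_concat L with h | ⟨P, c, h⟩
    · exact absurd h hLne
    · exact ⟨P, c, by simpa [List.concat_eq_append] using h⟩
  have hP : PosCF P := fun a ha => hL a (by simp [ha])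
  have hc : (1:ℤ) ≤ c := hL c (by simp)
  set t : ℤ := (-1) ^ P.length * 1 with ht
  have hsplit : signSeq (P ++ [c]) = sgnAux 1 P ++ List.replicate c.natAbs t := by
    rw [signSeq, sgnAux_append, sgnAux, Int.sign_eq_one_of_pos (by omega), mul_one, sgnAux,
      List.append_nil]
  by_cases hc2 : 2 ≤ c
  · refine ⟨P ++ [c-1], ?_, by simp, ?_, Or.inl ⟨P, c, rfl, rfl, hc2⟩⟩
    · intro a ha
      rcases List.mem_append.mp ha with h | h
      · exact hP a h
      · simp at h; omega
    · have hsplit' : signSeq (P ++ [c-1]) = sgnAux 1 P ++ List.replicate (c-1).natAbs t := by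
        rw [signSeq, sgnAux_append, sgnAux, Int.sign_eq_one_of_pos (by omega), mul_one, sgnAux,
          List.append_nil]
      have hrep : List.replicate c.natAbs t = List.replicate (c-1).natAbs t ++ [t] := by
        have : c.natAbs = (c-1).natAbs + 1 := by omega
        rw [this, List.replicate_succ']
      have hseq : signSeq (P ++ [c]) = signSeq (P ++ [c-1]) ++ [t] := by
        rw [hsplit, hsplit', hrep, List.append_assoc]
      rw [isgn, hseq, tail_dropLast_concat _ _ (signSeq_ne_nil _ (by
        intro a ha
        rcases List.mem_append.mp ha with h | h
        · exact hP a h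
        · simp at h; omega) (by simp))]
  · have hc1 : c = 1 := by omega
    subst hc1
    have hPne : P ≠ [] := by
      intro h
      subst h
      rw [ell_eq] at h2
      simp at h2
    refine ⟨P, hP, hPne, ?_, Or.inr ⟨P, rfl, rfl⟩⟩
    have hseq : signSeq (P ++ [1]) = signSeq P ++ [t] := by
      rw [hsplit]; rfl
    rw [isgn, hseq, tail_dropLast_concat _ _ (signSeq_ne_nil _ hP hPne)]

lemma part3 (L M : List ℤ) (hL : PosCF L) (hM : PosCF M) (h2L : 2 ≤ ell L L.length)
    (h2M : 2 ≤ ell M M.length) (h : isgn L = isgn M) : L = M ∨ lastOneRel L M := by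
  obtain ⟨KL, hKL, hKLne, hiL, hcaseL⟩ := structL L hL h2L
  obtain ⟨KM, hKM, hKMne, hiM, hcaseM⟩ := structL M hM h2M
  have htails : (signSeq KL).tail = (signSeq KM).tail := by rw [← hiL, ← hiM, h]
  have hheadL : (signSeq KL).head? = some 1 := sgnAux_head 1 KL hKL hKLne
  have hheadM : (signSeq KM).head? = some 1 := sgnAux_head 1 KM hKM hKMne
  have hseq : signSeq KL = signSeq KM := by
    rw [← List.cons_head?_tail hheadL, ← List.cons_head?_tail hheadM, htails]
  have hK : KL = KM := signSeq_inj _ _ hKL hKM hseq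
  rcases hcaseL with ⟨P, c, hL1, hL2, hc⟩ | ⟨P, hL1, hL2⟩ <;>
    rcases hcaseM with ⟨Q, d, hM1, hM2, hd⟩ | ⟨Q, hM1, hM2⟩
  · left
    rw [hL2, hM2] at hK
    obtain ⟨rfl, h2⟩ := List.append_inj' hK (by simp)
    have : c = d := by simpa using h2
    rw [hL1, hM1, this]
  · right
    have hQ : Q = P ++ [c - 1] := by rw [← hM2, ← hK, hL2]
    refine ⟨P, c - 1, Or.inr ⟨?_, ?_⟩⟩
    · rw [hM1, hQ, List.append_assoc]; rfl
    · rw [hL1]; norm_num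
  · right
    have hP : P = Q ++ [d - 1] := by rw [← hL2, hK, hM2]
    refine ⟨Q, d - 1, Or.inl ⟨?_, ?_⟩⟩
    · rw [hL1, hP, List.append_assoc]; rfl
    · rw [hM1]; norm_num
  · left
    rw [hL2, hM2] at hK
    rw [hL1, hM1, hK]

lemma part1 (L : List ℤ) (hL : PosCF L) (h2 : 2 ≤ ell L L.length) :
    (isgn L).length + 2 = ell L L.length ∧ ∀ s ∈ isgn L, s = 1 ∨ s = -1 := by
  have hlen : (signSeq L).length = ell L L.length := by
    rw [ell_eq]; exact sgnAux_length 1 L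
  constructor
  · rw [isgn, List.length_dropLast, List.length_tail, hlen]; omega
  · intro s hs
    have hsub : List.Sublist (isgn L) (signSeq L) :=
      List.Sublist.trans (List.dropLast_sublist _) (List.tail_sublist _)
    have := sgnAux_mem 1 L hL s (hsub.mem hs)
    simpa using this

lemma part2 (σ : List ℤ) (hσ : ∀ s ∈ σ, s = 1 ∨ s = -1) :
    ∃ L : List ℤ, PosCF L ∧ ell L L.length = σ.length + 2 ∧ isgn L = σ := by
  set e : ℤ := σ.getLastD 1 with he
  have hev : ∀ x ∈ (1:ℤ) :: (σ ++ [e]), x = 1 ∨ x = -1 := by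
    intro x hx
    rcases List.mem_cons.mp hx with h | h
    · left; exact h
    rcases List.mem_append.mp h with h | h
    · exact hσ x h
    · simp at h
      subst h
      rcases σ with _ | ⟨a, v⟩
      · left; rfl
      · refine hσ _ ?_
        rw [he, List.getLastD_eq_getLast?, List.getLast?_eq_getLast (l := a :: v) (by simp),
          Option.getD_some]
        exact List.getLast_mem _
  obtain ⟨h1, h2⟩ := sgnAux_dec 1 (σ ++ [e]) hev
  refine ⟨dec (1 :: (σ ++ [e])), h2, ?_, ?_⟩
  · rw [ell_eq, ← sgnAux_length 1, show sgnAux 1 (dec (1 :: (σ ++ [e]))) = signSeq _ from rfl]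
    rw [show signSeq (dec (1 :: (σ ++ [e]))) = _ from h1]
    simp
  · rw [isgn, show signSeq (dec (1 :: (σ ++ [e]))) = _ from h1, List.tail_cons,
      List.dropLast_concat]

lemma cfVal_cons_none {cs : List ℤ} (c : ℤ) (h : cfVal cs = none) :
    cfVal (c :: cs) = some (c : ℚ) := by
  rw [cfVal, h]

lemma cfVal_cons_some {cs : List ℤ} (c : ℤ) {x : ℚ} (h : cfVal cs = some x) (hx : x ≠ 0) :
    cfVal (c :: cs) = some ((c : ℚ) + 1 / x) := by
  rw [cfVal, h]; simp [hx]

lemma cfVal_singleton (c : ℤ) : cfVal [c] = some (c : ℚ) := rfl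

/-- canonical value bracket -/
lemma cfVal_canon : ∀ (cs : List ℤ) (c : ℤ), PosCF (c :: cs) →
    (2 : ℤ) ≤ (c :: cs).getLast (by simp) →
    ∃ q : ℚ, cfVal (c :: cs) = some q ∧ (c : ℚ) ≤ q ∧ q < c + 1 ∧ 1 < q ∧
      (cs = [] → q = c) ∧ (cs ≠ [] → (c : ℚ) < q) := by
  intro cs
  induction cs with
  | nil =>
    intro c _ hlast
    have h2 : (2:ℤ) ≤ c := by simpa using hlast
    refine ⟨(c:ℚ), cfVal_singleton c, le_refl _, by norm_num, by exact_mod_cast h2, fun _ => rfl,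
      fun h => absurd rfl h⟩
  | cons d ds ih =>
    intro c hpos hlast
    have hc : (1:ℤ) ≤ c := hpos c (by simp)
    have hpos' : PosCF (d :: ds) := fun a ha => hpos a (by simp [ha])
    have hlast' : (2:ℤ) ≤ (d :: ds).getLast (by simp) := by
      rwa [List.getLast_cons (by simp : d :: ds ≠ [])] at hlast
    obtain ⟨q', hval', hle', hlt', h1', _, _⟩ := ih d hpos' hlast'
    have hq'0 : q' ≠ 0 := by positivity
    have hinv1 : 0 < 1 / q' := by positivity
    have hinv2 : 1 / q' < 1 := by
      rw [div_lt_one (by positivity)]; exact h1'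
    refine ⟨(c:ℚ) + 1/q', cfVal_cons_some c hval' hq'0, by linarith, by linarith, ?_,
      by simp, fun _ => by linarith⟩
    have : (1:ℚ) ≤ (c:ℚ) := by exact_mod_cast hc
    linarith

/-- canonical uniqueness -/
lemma cfVal_canon_inj : ∀ (cs : List ℤ) (c : ℤ) (ds : List ℤ) (d : ℤ),
    PosCF (c :: cs) → (2:ℤ) ≤ (c :: cs).getLast (by simp) →
    PosCF (d :: ds) → (2:ℤ) ≤ (d :: ds).getLast (by simp) →
    cfVal (c :: cs) = cfVal (d :: ds) → c :: cs = d :: ds := by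
  intro cs
  induction cs with
  | nil =>
    intro c ds d hpc hlc hpd hld heq
    obtain ⟨q, hq, hle, hlt, _, hnil, _⟩ := cfVal_canon [] c hpc hlc
    obtain ⟨q2, hq2, hle2, hlt2, _, hnil2, hne2⟩ := cfVal_canon ds d hpd hld
    rw [hq, hq2] at heq
    obtain rfl : q = q2 := by injection heq
    have hcd : c = d := by
      have h1 : (c:ℚ) < d + 1 := lt_of_le_of_lt hle hlt2
      have h2 : (d:ℚ) < c + 1 := lt_of_le_of_lt hle2 hlt
      have h1' : c < d + 1 := by exact_mod_cast h1
      have h2' : d < c + 1 := by exact_mod_cast h2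
      omega
    subst hcd
    rcases ds with _ | ⟨e, es⟩
    · rfl
    · exfalso
      have h1 := hne2 (by simp)
      rw [hnil rfl] at h1
      exact lt_irrefl _ h1
  | cons e es ih =>
    intro c ds d hpc hlc hpd hld heq
    obtain ⟨q, hq, hle, hlt, _, _, hne⟩ := cfVal_canon (e :: es) c hpc hlc
    obtain ⟨q2, hq2, hle2, hlt2, _, hnil2, _⟩ := cfVal_canon ds d hpd hld
    rw [hq, hq2] at heq
    obtain rfl : q = q2 := by injection heq
    have hcd : c = d := by
      have h1' : c < d + 1 := by exact_mod_cast lt_of_le_of_lt hle hlt2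
      have h2' : d < c + 1 := by exact_mod_cast lt_of_le_of_lt hle2 hlt
      omega
    subst hcd
    rcases ds with _ | ⟨f, fs⟩
    · exfalso
      have h1 := hne (by simp)
      have h2 := hnil2 rfl
      rw [h2] at h1
      exact lt_irrefl _ h1
    · -- both tails nonempty
      have hpc' : PosCF (e :: es) := fun a ha => hpc a (by simp [ha])
      have hpd' : PosCF (f :: fs) := fun a ha => hpd a (by simp [ha])
      have hlc' : (2:ℤ) ≤ (e :: es).getLast (by simp) := by
        rwa [List.getLast_cons (by simp : e :: es ≠ [])] at hlc
      have hld' : (2:ℤ) ≤ (f :: fs).getLast (by simp) := by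
        rwa [List.getLast_cons (by simp : f :: fs ≠ [])] at hld
      obtain ⟨q1, hq1, _, _, h11, _, _⟩ := cfVal_canon es e hpc' hlc'
      obtain ⟨q2', hq2', _, _, h12, _, _⟩ := cfVal_canon fs f hpd' hld'
      have hval1 : cfVal (c :: e :: es) = some ((c:ℚ) + 1/q1) :=
        cfVal_cons_some c hq1 (by positivity)
      have hval2 : cfVal (c :: f :: fs) = some ((c:ℚ) + 1/q2') :=
        cfVal_cons_some c hq2' (by positivity)
      have heq2 : (c:ℚ) + 1/q1 = (c:ℚ) + 1/q2' := by
        injection (hval1.symm.trans (hq.trans (hq2.symm.trans hval2)))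
      have hq12 : q1 = q2' := by
        have h3 : 1/q1 = 1/q2' := by linarith
        rwa [one_div, one_div, inv_inj] at h3
      have := ih e fs f hpc' hlc' hpd' hld' (by rw [hq1, hq2', hq12])
      rw [this]

/-- value of any positive CF -/
lemma cfVal_posCF : ∀ (cs : List ℤ) (c : ℤ), PosCF (c :: cs) →
    ∃ q : ℚ, cfVal (c :: cs) = some q ∧ (c : ℚ) ≤ q ∧ 1 ≤ q ∧ (cs ≠ [] → (c : ℚ) < q) := by
  intro cs
  induction cs with
  | nil =>
    intro c hpos
    have hc : (1:ℤ) ≤ c := hpos c (by simp)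
    exact ⟨(c:ℚ), cfVal_singleton c, le_refl _, by exact_mod_cast hc, fun h => absurd rfl h⟩
  | cons d ds ih =>
    intro c hpos
    have hc : (1:ℤ) ≤ c := hpos c (by simp)
    have hc' : (1:ℚ) ≤ (c:ℚ) := by exact_mod_cast hc
    obtain ⟨q', hval', _, h1', _⟩ := ih d (fun a ha => hpos a (by simp [ha]))
    have hq'0 : q' ≠ 0 := by positivity
    have hinv : 0 < 1/q' := by positivity
    exact ⟨(c:ℚ) + 1/q', cfVal_cons_some c hval' hq'0, by linarith, by linarith,
      fun _ => by linarith⟩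

lemma cfVal_gt_one (L : List ℤ) (hL : PosCF L) (hne : L ≠ []) (hne1 : L ≠ [1]) :
    ∃ q : ℚ, cfVal L = some q ∧ 1 < q := by
  rcases L with _ | ⟨c, cs⟩
  · exact absurd rfl hne
  obtain ⟨q, hq, hle, h1, hlt⟩ := cfVal_posCF cs c hL
  have hc : (1:ℤ) ≤ c := hL c (by simp)
  refine ⟨q, hq, ?_⟩
  by_cases h2 : 2 ≤ c
  · have : (2:ℚ) ≤ (c:ℚ) := by exact_mod_cast h2
    linarith
  · have hc1 : c = 1 := by omega
    subst hc1
    have hcs : cs ≠ [] := by rintro rfl; exact hne1 rfl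
    have := hlt hcs
    simpa using this

lemma cfVal_append_congr (P : List ℤ) {Q Q' : List ℤ} (h : cfVal Q = cfVal Q') :
    cfVal (P ++ Q) = cfVal (P ++ Q') := by
  induction P with
  | nil => simpa using h
  | cons p ps ih =>
    rw [List.cons_append, List.cons_append, cfVal, cfVal, ih]

lemma cfVal_pair (c : ℤ) : cfVal [c, 1] = cfVal [c + 1] := by
  have h1 : cfVal [(1:ℤ)] = some (1:ℚ) := rfl
  rw [cfVal_cons_some c h1 one_ne_zero, cfVal_singleton]
  norm_num

/-- isgn invariance under the last-one relation -/
lemma isgn_rel (P : List ℤ) (hP : PosCF P) (d : ℤ) (hd : 1 ≤ d) :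
    isgn (P ++ [d, 1]) = isgn (P ++ [d + 1]) := by
  have hPd : PosCF (P ++ [d]) := by
    intro a ha
    rcases List.mem_append.mp ha with h | h
    · exact hP a h
    · simp at h; omega
  have hne : signSeq (P ++ [d]) ≠ [] := signSeq_ne_nil _ hPd (by simp)
  set t : ℤ := (-1) ^ P.length * 1 with ht
  have h1 : signSeq (P ++ [d, 1]) = signSeq (P ++ [d]) ++ [(-1) ^ (P.length + 1) * 1] := by
    have : P ++ [d, 1] = (P ++ [d]) ++ [1] := by rw [List.append_assoc]; rfl
    rw [this, signSeq, sgnAux_append, List.length_append]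
    congr 1
    show sgnAux ((-1) ^ (P.length + 1) * 1) [1] = _
    simp [sgnAux]
  have h2 : signSeq (P ++ [d + 1]) = signSeq (P ++ [d]) ++ [t] := by
    rw [signSeq, signSeq, sgnAux_append, sgnAux_append, List.append_assoc]
    congr 1
    show sgnAux t [d+1] = sgnAux t [d] ++ [t]
    simp only [sgnAux, List.append_nil]
    rw [Int.sign_eq_one_of_pos (show (0:ℤ) < d + 1 by omega),
      Int.sign_eq_one_of_pos (show (0:ℤ) < d by omega)]
    simp only [mul_one]
    have hnat : (d+1).natAbs = d.natAbs + 1 := by omega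
    rw [hnat, List.replicate_succ']
  rw [isgn, isgn, h1, h2, tail_dropLast_concat _ _ hne, tail_dropLast_concat _ _ hne]

/-- reduction to canonical form -/
lemma reduce (L : List ℤ) (hL : PosCF L) (hne : L ≠ []) (hne1 : L ≠ [1]) :
    ∃ (P : List ℤ) (d : ℤ), PosCF (P ++ [d]) ∧ 2 ≤ d ∧
      cfVal (P ++ [d]) = cfVal L ∧ isgn (P ++ [d]) = isgn L := by
  obtain ⟨P, c, rfl⟩ : ∃ P c, L = P ++ [c] := by
    rcases List.eq_nil_or_concat L with h | ⟨P, c, h⟩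
    · exact absurd h hne
    · exact ⟨P, c, by simpa [List.concat_eq_append] using h⟩
  have hc : (1:ℤ) ≤ c := hL c (by simp)
  have hP : PosCF P := fun a ha => hL a (by simp [ha])
  by_cases h2 : 2 ≤ c
  · exact ⟨P, c, hL, h2, rfl, rfl⟩
  · have hc1 : c = 1 := by omega
    subst hc1
    have hPne : P ≠ [] := by rintro rfl; exact hne1 rfl
    obtain ⟨Q, d, rfl⟩ : ∃ Q d, P = Q ++ [d] := by
      rcases List.eq_nil_or_concat P with h | ⟨Q, d, h⟩
      · exact absurd h hPne
      · exact ⟨Q, d, by simpa [List.concat_eq_append] using h⟩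
    have hd : (1:ℤ) ≤ d := hP d (by simp)
    have hQ : PosCF Q := fun a ha => hP a (by simp [ha])
    have hassoc : Q ++ [d] ++ [1] = Q ++ [d, 1] := by rw [List.append_assoc]; rfl
    refine ⟨Q, d + 1, ?_, by omega, ?_, ?_⟩
    · intro a ha
      rcases List.mem_append.mp ha with h | h
      · exact hQ a h
      · simp at h; omega
    · rw [hassoc, cfVal_append_congr Q (cfVal_pair d).symm]
    · rw [hassoc, isgn_rel Q hQ d hd]

lemma den_sub_int (q : ℚ) (c : ℤ) : (q - (c:ℚ)).den = q.den := by
  have hb0 : (0:ℤ) < (q.den : ℤ) := by exact_mod_cast q.pos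
  have hcop : IsCoprime (q.num) ((q.den:ℤ)) := by
    rw [Int.isCoprime_iff_gcd_eq_one]
    exact q.reduced
  have hcop2 : IsCoprime (q.num - c * q.den) ((q.den:ℤ)) := by
    have := hcop.add_mul_left_left (-c)
    simpa [mul_comm, sub_eq_add_neg] using this
  have hcop3 : Nat.Coprime (q.num - c * q.den).natAbs ((q.den:ℤ)).natAbs := by
    rw [Int.isCoprime_iff_gcd_eq_one] at hcop2
    exact hcop2
  have hval : ((q.num - c * q.den : ℤ) : ℚ) / ((q.den : ℤ) : ℚ) = q - (c:ℚ) := by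
    have hden : ((q.den:ℤ):ℚ) ≠ 0 := by exact_mod_cast q.den_nz
    have hqd : q * ((q.den:ℤ):ℚ) = ((q.num:ℤ):ℚ) := by
      push_cast
      exact_mod_cast Rat.mul_den_eq_num q
    rw [div_eq_iff hden, sub_mul, hqd]
    push_cast
    ring
  have := Rat.den_div_eq_of_coprime hb0 hcop3
  rw [hval] at this
  exact_mod_cast this

lemma den_inv_pos (r : ℚ) (h : 0 < r) : ((r⁻¹).den : ℤ) = r.num := by
  have hnum : (0:ℤ) < r.num := Rat.num_pos.mpr h
  have hcop : Nat.Coprime ((r.den:ℤ)).natAbs (r.num).natAbs := by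
    simpa [Int.natAbs_natCast] using (Rat.reduced r).symm
  have hval : ((r.den : ℤ) : ℚ) / ((r.num : ℤ) : ℚ) = r⁻¹ := by
    have hrne : r ≠ 0 := ne_of_gt h
    have hnumne : ((r.num : ℤ) : ℚ) ≠ 0 := by exact_mod_cast hnum.ne'
    rw [div_eq_iff hnumne]
    have h2 : ((r.num : ℤ) : ℚ) = r * ((r.den : ℤ) : ℚ) := by
      push_cast
      exact (Rat.mul_den_eq_num r).symm
    rw [h2, inv_mul_cancel_left₀ hrne]
  have := Rat.den_div_eq_of_coprime hnum hcop
  rw [hval] at this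
  exact this

lemma exists_canon (q : ℚ) (hq : 1 < q) :
    ∃ (P : List ℤ) (d : ℤ), PosCF (P ++ [d]) ∧ 2 ≤ d ∧ cfVal (P ++ [d]) = some q := by
  suffices H : ∀ (n : ℕ) (q : ℚ), q.den ≤ n → 1 < q →
      ∃ (P : List ℤ) (d : ℤ), PosCF (P ++ [d]) ∧ 2 ≤ d ∧ cfVal (P ++ [d]) = some q from
    H q.den q le_rfl hq
  intro n
  induction n with
  | zero => intro q hden _; exact absurd hden (by have := q.pos; omega)
  | succ n ih =>
    intro q hden hq
    set c : ℤ := ⌊q⌋ with hc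
    have hcle : (c:ℚ) ≤ q := Int.floor_le q
    have hclt : q < c + 1 := Int.lt_floor_add_one q
    have hc1 : 1 ≤ c := by
      rw [hc, Int.le_floor]; exact_mod_cast hq.le
    by_cases hint : (c:ℚ) = q
    · have hc2 : 2 ≤ c := by
        by_contra h
        have : c = 1 := by omega
        rw [this] at hint
        rw [← hint] at hq
        norm_num at hq
      refine ⟨[], c, ?_, hc2, ?_⟩
      · intro a ha; simp at ha; omega
      · rw [List.nil_append, cfVal_singleton, hint]
    · set r : ℚ := q - (c:ℚ) with hr
      have hr0 : 0 < r := by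
        rw [hr, sub_pos]
        exact lt_of_le_of_ne hcle hint
      have hr1 : r < 1 := by rw [hr]; linarith
      have hq' : 1 < r⁻¹ := (one_lt_inv₀ hr0).mpr hr1
      have hrden : r.den = q.den := den_sub_int q c
      have hnumlt : r.num < (r.den : ℤ) := by
        have h1 : (r.num : ℚ) = r * r.den := (Rat.mul_den_eq_num r).symm
        have h2 : (r.num : ℚ) < (r.den : ℚ) := by
          rw [h1]
          calc r * r.den < 1 * r.den := by
                apply mul_lt_mul_of_pos_right hr1
                exact_mod_cast r.pos
            _ = r.den := one_mul _
        exact_mod_cast h2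
      have hdlt : (r⁻¹).den < q.den := by
        have h3 := den_inv_pos r hr0
        have : ((r⁻¹).den : ℤ) < (q.den : ℤ) := by rw [h3, ← hrden]; exact_mod_cast hnumlt
        exact_mod_cast this
      obtain ⟨P, d, hP, hd, hval⟩ := ih r⁻¹ (by omega) hq'
      have hq'0 : r⁻¹ ≠ 0 := by positivity
      refine ⟨c :: P, d, ?_, hd, ?_⟩
      · intro a ha
        rw [List.cons_append] at ha
        rcases List.mem_cons.mp ha with h | h
        · omega
        · exact hP a h
      · rw [List.cons_append, cfVal_cons_some c hval hq'0]
        congr 1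
        rw [one_div, inv_inv, hr]
        ring

lemma canon_inj' (P : List ℤ) (d : ℤ) (Q : List ℤ) (e : ℤ)
    (hP : PosCF (P ++ [d])) (hd : 2 ≤ d) (hQ : PosCF (Q ++ [e])) (he : 2 ≤ e)
    (h : cfVal (P ++ [d]) = cfVal (Q ++ [e])) : P ++ [d] = Q ++ [e] := by
  obtain ⟨c, cs, hcs⟩ := List.exists_cons_of_ne_nil (show P ++ [d] ≠ [] by simp)
  obtain ⟨c', cs', hcs'⟩ := List.exists_cons_of_ne_nil (show Q ++ [e] ≠ [] by simp)
  have hl1 : (c :: cs).getLast (by simp) = d := by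
    have h1 : (P ++ [d]).getLast? = some d := by simp
    rw [hcs, List.getLast?_eq_getLast (l := c :: cs) (by simp)] at h1
    injection h1
  have hl2 : (c' :: cs').getLast (by simp) = e := by
    have h1 : (Q ++ [e]).getLast? = some e := by simp
    rw [hcs', List.getLast?_eq_getLast (l := c' :: cs') (by simp)] at h1
    injection h1
  rw [hcs, hcs']
  exact cfVal_canon_inj cs c cs' c' (hcs ▸ hP) (hl1 ▸ hd) (hcs' ▸ hQ) (hl2 ▸ he)
    (by rw [← hcs, ← hcs']; exact h)

lemma ell_ge_two (P : List ℤ) (d : ℤ) (hP : PosCF (P ++ [d])) (hd : 2 ≤ d) :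
    2 ≤ ell (P ++ [d]) (P ++ [d]).length := by
  rw [ell_eq]
  have : d.natAbs ∈ (P ++ [d]).map Int.natAbs := by simp
  calc 2 ≤ d.natAbs := by omega
    _ ≤ ((P ++ [d]).map Int.natAbs).sum := List.single_le_sum (by simp) _ this

lemma part4 : ∃ f : {x : ℚ // 1 < x} → {σ : List ℤ // ∀ s ∈ σ, s = 1 ∨ s = -1},
    Function.Bijective f ∧
    ∀ (x : {x : ℚ // 1 < x}) (L : List ℤ), PosCF L → cfVal L = some x.val →
      isgn L = (f x).val := by
  have hex : ∀ x : {x : ℚ // 1 < x}, ∃ PL : List ℤ × ℤ, PosCF (PL.1 ++ [PL.2]) ∧ 2 ≤ PL.2 ∧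
      cfVal (PL.1 ++ [PL.2]) = some x.val := by
    intro x
    obtain ⟨P, dd, h1, h2, h3⟩ := exists_canon x.val x.prop
    exact ⟨(P, dd), h1, h2, h3⟩
  choose E hEpos hEd hEval using hex
  have hmem : ∀ x, ∀ s ∈ isgn ((E x).1 ++ [(E x).2]), s = 1 ∨ s = -1 := by
    intro x s hs
    have hsub : List.Sublist (isgn ((E x).1 ++ [(E x).2])) (signSeq ((E x).1 ++ [(E x).2])) :=
      List.Sublist.trans (List.dropLast_sublist _) (List.tail_sublist _)
    simpa using sgnAux_mem 1 _ (hEpos x) s (hsub.mem hs)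
  refine ⟨fun x => ⟨isgn ((E x).1 ++ [(E x).2]), hmem x⟩, ⟨?_, ?_⟩, ?_⟩
  · -- injective
    intro x y hxy
    have h : isgn ((E x).1 ++ [(E x).2]) = isgn ((E y).1 ++ [(E y).2]) := by
      simpa using congrArg Subtype.val hxy
    have := part3 _ _ (hEpos x) (hEpos y) (ell_ge_two _ _ (hEpos x) (hEd x))
      (ell_ge_two _ _ (hEpos y) (hEd y)) h
    rcases this with heq | ⟨R, c, ⟨h1, _⟩ | ⟨h1, _⟩⟩
    · have : some x.val = some y.val := by rw [← hEval x, ← hEval y, heq]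
      exact Subtype.ext (by injection this)
    · -- E x ends with 1, contradiction with 2 ≤ (E x).2
      exfalso
      have h1' : (E x).1 ++ [(E x).2] = (R ++ [c]) ++ [1] := by rw [h1, List.append_assoc]; rfl
      have := List.append_inj' h1' (by simp)
      have h2 := this.2
      simp at h2
      have := hEd x
      omega
    · exfalso
      have h1' : (E y).1 ++ [(E y).2] = (R ++ [c]) ++ [1] := by rw [h1, List.append_assoc]; rfl
      have := List.append_inj' h1' (by simp)
      have h2 := this.2
      simp at h2
      have := hEd y
      omega
  · -- surjective
    intro ⟨σ, hσ⟩
    obtain ⟨L, hLpos, hLell, hLisgn⟩ := part2 σ hσ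
    have hLne : L ≠ [] := by
      rintro rfl
      rw [ell_eq] at hLell
      simp at hLell
    have hLne1 : L ≠ [1] := by
      rintro rfl
      rw [ell_eq] at hLell
      have h1 : (List.map Int.natAbs [(1:ℤ)]).sum = 1 := by simp
      rw [h1] at hLell
      omega
    obtain ⟨q, hq, hq1⟩ := cfVal_gt_one L hLpos hLne hLne1
    obtain ⟨P, dd, hP1, hP2, hP3, hP4⟩ := reduce L hLpos hLne hLne1
    refine ⟨⟨q, hq1⟩, ?_⟩
    have hPval : cfVal (P ++ [dd]) = some q := by rw [hP3, hq]
    have hEq : (E ⟨q, hq1⟩).1 ++ [(E ⟨q, hq1⟩).2] = P ++ [dd] :=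
      canon_inj' _ _ _ _ (hEpos ⟨q, hq1⟩) (hEd ⟨q, hq1⟩) hP1 hP2
        (by rw [hEval ⟨q, hq1⟩, hPval])
    apply Subtype.ext
    show isgn _ = σ
    rw [hEq, hP4, hLisgn]
  · -- compatibility
    intro x L hLpos hLval
    have hLne : L ≠ [] := by rintro rfl; simp [cfVal] at hLval
    have hLne1 : L ≠ [1] := by
      rintro rfl
      have : some (1:ℚ) = some x.val := hLval
      have h1 : (1:ℚ) = x.val := by injection this
      have := x.prop
      rw [← h1] at this
      exact lt_irrefl _ this
    obtain ⟨P, dd, hP1, hP2, hP3, hP4⟩ := reduce L hLpos hLne hLne1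
    have hPval : cfVal (P ++ [dd]) = some x.val := by rw [hP3, hLval]
    have hEq : (E x).1 ++ [(E x).2] = P ++ [dd] :=
      canon_inj' _ _ _ _ (hEpos x) (hEd x) hP1 hP2 (by rw [hEval x, hPval])
    show isgn L = isgn _
    rw [hEq, hP4]

/-- The inner sign sequence gives, for each `k ≥ 0`, a bijection between
positive continued fractions with `ℓₙ = k + 2` (up to the identity
`[c₁,…,c_m,1] = [c₁,…,c_m+1]`) and `{1,−1}^k`; consequently `p/q ↦ isgn` of an expansion
is a well-defined bijection from `{p/q ∈ ℚ : p/q > 1}` onto all finite sign sequences. -/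
theorem isgn_bijection :
    (∀ L : List ℤ, PosCF L → 2 ≤ ell L L.length →
      (isgn L).length + 2 = ell L L.length ∧ ∀ s ∈ isgn L, s = 1 ∨ s = -1) ∧
    (∀ σ : List ℤ, (∀ s ∈ σ, s = 1 ∨ s = -1) →
      ∃ L : List ℤ, PosCF L ∧ ell L L.length = σ.length + 2 ∧ isgn L = σ) ∧
    (∀ L M : List ℤ, PosCF L → PosCF M → 2 ≤ ell L L.length → 2 ≤ ell M M.length →
      isgn L = isgn M → L = M ∨ lastOneRel L M) ∧
    (∃ f : {x : ℚ // 1 < x} → {σ : List ℤ // ∀ s ∈ σ, s = 1 ∨ s = -1},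
      Function.Bijective f ∧
      ∀ (x : {x : ℚ // 1 < x}) (L : List ℤ), PosCF L → cfVal L = some x.val →
        isgn L = (f x).val) :=
  ⟨part1, part2, part3, part4⟩
end

section
/- Let [b_1,…,b_n] be an even continued fraction with b_1 > 0. Then Π_{i∈S_1} φ_P(y_i) = l^{|b_1|}·w^{−1}, as elements of K = ℚ(l,s) with q = s². -/
open scoped BigOperators

/-- The conditions of Definition 3.5: every `|c_i| ≥ 1` (i.e. `c_i ≠ 0`), and whenever
`t_i = t_{i+1}` both `|c_i| > 1` and `|c_{i+1}| > 1`. -/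
def QCond (L : List ℤ) : Prop :=
  (∀ c ∈ L, c ≠ 0) ∧
  ∀ i : ℕ, 1 ≤ i → i + 1 ≤ L.length → typ L i = typ L (i + 1) →
    1 < (L.getD (i - 1) 0).natAbs ∧ 1 < (L.getD i 0).natAbs

/-- `v` is a label of the labeled path poset `Q[c₁,…,cₙ]`: `1 ≤ v ≤ ℓₙ − 1`, and `v` is not
one of the removed labels `ℓ_i` with `t_i = t_{i+1}`. -/
def kept (L : List ℤ) (v : ℕ) : Prop :=
  1 ≤ v ∧ v < ell L L.length ∧
  ∀ i ∈ Finset.Ico 1 L.length, typ L i = typ L (i + 1) → v ≠ ell L i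

open Classical in
/-- The underlying label set of `Q[c₁,…,cₙ]`. -/
noncomputable def QFinset (L : List ℤ) : Finset ℕ :=
  (Finset.Ioo 0 (ell L L.length)).filter (kept L)

/-- The index `i` of the segment `(ℓ_{i−1}, ℓ_i]` containing the label `v`. -/
def seg (L : List ℤ) (v : ℕ) : ℕ :=
  1 + ((Finset.range L.length).filter (fun i => ell L (i + 1) < v)).card

/-- `u < v` are consecutive labels of `Q[c₁,…,cₙ]`. -/
def consec (L : List ℤ) (u v : ℕ) : Prop :=
  kept L u ∧ kept L v ∧ u < v ∧ ∀ w, u < w → w < v → ¬ kept L w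

/-- The sign of the Hasse edge between consecutive labels `u < v` of `Q[c₁,…,cₙ]`:
if no label is skipped the edge lies in the segment of `v` and has sign `t_{seg v}`;
if a removed junction label `ℓ_j` (with `t_j = t_{j+1}`) is skipped, the edge joining the
two adjacent chains has sign `−t_j = −t_{seg v}`. -/
def edgeSign (L : List ℤ) (u v : ℕ) : ℤ :=
  if u + 1 = v then typ L (seg L v) else -typ L (seg L v)

/-- The covering relation of `Q[c₁,…,cₙ]`: consecutive labels `u < v` give a cover `u ⋖ v`
when the corresponding edge sign is `1`, and a cover `v ⋖ u` when it is `−1`. -/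
def pcov (L : List ℤ) (u v : ℕ) : Prop :=
  (consec L u v ∧ edgeSign L u v = 1) ∨ (consec L v u ∧ edgeSign L v u = -1)

/-- The order of the labeled path poset `Q[c₁,…,cₙ]` (on labels). -/
def ple (L : List ℤ) : ℕ → ℕ → Prop := Relation.ReflTransGen (pcov L)

/-- The order of `Q[c₁,…,cₙ]` as a relation on its underlying label set. -/
noncomputable def pleRel (L : List ℤ) :
    {v : ℕ // v ∈ QFinset L} → {v : ℕ // v ∈ QFinset L} → Prop :=
  fun a b => ple L (a : ℕ) (b : ℕ)

/-- Order ideals (downward-closed subsets) of `Q[c₁,…,cₙ]`. -/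
def isIdeal (L : List ℤ) (I : Finset ℕ) : Prop :=
  I ⊆ QFinset L ∧ ∀ u v : ℕ, ple L u v → v ∈ I → u ∈ I

open Classical in
/-- The F-polynomial `F[c₁,…,cₙ] = F(Q[c₁,…,cₙ]) = Σ_I Π_{i∈I} y_i ∈ ℤ[y₁,y₂,…]`,
the sum over all order ideals `I` of `Q[c₁,…,cₙ]`. -/
noncomputable def Fpoly (L : List ℤ) : MvPolynomial ℕ ℤ :=
  ∑ I ∈ (QFinset L).powerset, if isIdeal L I then ∏ i ∈ I, MvPolynomial.X i else 0

/-- The label set of the chain `S_m`: the labels `ℓ_{m−1}+1, …, ℓ_m − 1`. -/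
def SmSet (L : List ℤ) (m : ℕ) : Finset ℕ := Finset.Ioo (ell L (m - 1)) (ell L m)

/-- `lam L m j = λ_m(j)`, the `j`-th vertex of `S_m` from the bottom:
`ℓ_{m−1}+j` if `t_m = 1` and `ℓ_m − j` if `t_m = −1`. -/
def lam (L : List ℤ) (m j : ℕ) : ℕ :=
  if typ L m = 1 then ell L (m - 1) + j else ell L m - j

/-- Order ideals of the chain `S_m` (ordered by labels if `t_m = 1`, reversed if `t_m = −1`). -/
def chainIdeal (L : List ℤ) (m : ℕ) (I : Finset ℕ) : Prop :=
  I ⊆ SmSet L m ∧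
  ∀ u ∈ SmSet L m, ∀ v ∈ SmSet L m,
    (if typ L m = 1 then u ≤ v else v ≤ u) → v ∈ I → u ∈ I

open Classical in
/-- The F-polynomial `F(S_m)` of the chain `S_m`. -/
noncomputable def FS (L : List ℤ) (m : ℕ) : MvPolynomial ℕ ℤ :=
  ∑ I ∈ (SmSet L m).powerset, if chainIdeal L m I then ∏ i ∈ I, MvPolynomial.X i else 0

noncomputable section

/-- The field `K = ℚ(l,s)` of rational functions in two variables over `ℚ`. -/
abbrev KK : Type := FractionRing (MvPolynomial (Fin 2) ℚ)

/-- The variable `l` of `K = ℚ(l,s)`. -/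
def lK : KK := algebraMap (MvPolynomial (Fin 2) ℚ) KK (MvPolynomial.X 0)

/-- The variable `s = q^{1/2}` of `K = ℚ(l,s)`. -/
def sK : KK := algebraMap (MvPolynomial (Fin 2) ℚ) KK (MvPolynomial.X 1)

/-- `q = s²`. -/
def qK : KK := sK ^ 2

/-- `w = (1 − l²q)/(1 − q⁻¹)`. -/
def wK : KK := (1 - lK ^ 2 * qK) / (1 - qK⁻¹)

/-- The values of the specialization `φ_P` (associated to the even continued fraction `L`,
which only matters through the sign of `b₁`): `y₁ ↦ l²·w⁻¹` if `b₁ > 0` and `y₁ ↦ q⁻²·w`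
if `b₁ < 0`; `y_{2i} ↦ −l²q` and `y_{2i+1} ↦ −q⁻¹` for `i ≥ 1`. -/
def phiPvar (L : List ℤ) (i : ℕ) : KK :=
  if i = 1 then (if 0 < L.headI then lK ^ 2 * wK⁻¹ else qK⁻¹ ^ 2 * wK)
  else if i % 2 = 0 then -(lK ^ 2 * qK) else -qK⁻¹

/-- The specialization `φ_P : ℤ[y₁,y₂,…] → K`. -/
def phiP (L : List ℤ) (p : MvPolynomial ℕ ℤ) : KK :=
  MvPolynomial.eval₂ (Int.castRingHom KK) (phiPvar L) p

end

lemma sK_ne : sK ≠ 0 := by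
  have : Function.Injective (algebraMap (MvPolynomial (Fin 2) ℚ) KK) :=
    IsFractionRing.injective _ _
  intro h
  exact MvPolynomial.X_ne_zero (1 : Fin 2) (this (by simpa [sK] using h))

lemma qK_ne : qK ≠ 0 := pow_ne_zero _ sK_ne

lemma prod_aux (L : List ℤ) (hb1 : 0 < L.headI) :
    ∀ k : ℕ, ∏ i ∈ Finset.Ioo 0 (2*k+2), phiPvar L i = lK ^ (2*k+2) * wK⁻¹ := by
  intro k
  induction k with
  | zero =>
      have : Finset.Ioo 0 2 = {1} := rfl
      simp [this, phiPvar, hb1]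
  | succ k ih =>
      have h1 : (0:ℕ) < 2*k+2 := by omega
      have h2 : (0:ℕ) < 2*k+3 := by omega
      have e : 2*(k+1)+2 = (2*k+3)+1 := by ring
      have step : ∀ n : ℕ, 0 < n →
          ∏ i ∈ Finset.Ioo 0 (n+1), phiPvar L i = (∏ i ∈ Finset.Ioo 0 n, phiPvar L i) * phiPvar L n := by
        intro n hn
        have : Finset.Ioo 0 (n+1) = insert n (Finset.Ioo 0 n) := by
          ext x; simp [Finset.mem_Ioo]; omega
        rw [this, Finset.prod_insert (by simp)]
        ring
      rw [e, step _ (by omega)]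
      have e2 : 2*k+3 = (2*k+2)+1 := by ring
      rw [e2, step _ (by omega), ih]
      have hv1 : phiPvar L (2*k+2) = -(lK ^ 2 * qK) := by
        have : (2*k+2) % 2 = 0 := by omega
        simp [phiPvar, this]
      have hv2 : phiPvar L (2*k+2+1) = -qK⁻¹ := by
        have h3 : (2*k+2+1) % 2 = 1 := by omega
        have h4 : 2*k+2+1 ≠ 1 := by omega
        simp [phiPvar, h4, h3]
      rw [show (2*k+2)+1 = 2*k+3 from rfl] at hv2 ⊢
      rw [hv1, hv2]
      have hq : qK * qK⁻¹ = 1 := mul_inv_cancel₀ qK_ne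
      linear_combination (lK ^ (2*k+2) * wK⁻¹ * lK ^ 2) * hq

/-- For an even continued fraction `[b₁,…,bₙ]` with `b₁ > 0`,
`Π_{i∈S₁} φ_P(y_i) = l^{|b₁|}·w⁻¹`. -/
theorem phiP_first_chain (L : List ℤ) (hL : EvenCF L) (hne : L ≠ []) (hb1 : 0 < L.headI) :
    ∏ i ∈ SmSet L 1, phiPvar L i = lK ^ L.headI.natAbs * wK⁻¹ := by
  obtain ⟨a, t, rfl⟩ : ∃ a t, L = a :: t := ⟨L.headI, L.tail, (List.cons_head!_tail (by simpa using hne)).symm⟩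
  obtain ⟨hdvd, hne0⟩ := hL a (by simp)
  have hN : ∃ k : ℕ, a.natAbs = 2*k+2 := by
    obtain ⟨c, hc⟩ := hdvd
    have : 0 < a := by simpa using hb1
    refine ⟨c.toNat - 1, ?_⟩
    omega
  obtain ⟨k, hk⟩ := hN
  have hset : SmSet (a :: t) 1 = Finset.Ioo 0 (2*k+2) := by
    simp [SmSet, ell, hk]
  rw [hset, prod_aux _ hb1 k]
  simp [hk]
end
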